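/- (Gallai–Milgram, strong form) If P is a path partition of an undirected graph G that is minimal (no path partition of G has fewer paths), then there exists an independent set S of G containing exactly one vertex from each path of P. -/

import Mathlib

open SimpleGraph

variable {V : Type*}

/-- A walk is an induced path: it is a path and every adjacency between its
vertices is an edge of the walk. -/
def IsInducedWalk (G : SimpleGraph V) {u v : V} (p : G.Walk u v) : Prop :=
  p.IsPath ∧ ∀ a ∈ p.support, ∀ b ∈ p.support, G.Adj a b → s(a, b) ∈ p.edges

/-- A walk is an isometric (shortest) path between its endpoints. -/
def IsIsometricWalk (G : SimpleGraph V) {u v : V} (p : G.Walk u v) : Prop :=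
  p.IsPath ∧ p.length = G.dist u v

/-- A family of walks is a path cover: each walk is a path and every
vertex lies on at least one of the walks. -/
def IsPathCover (G : SimpleGraph V) {n : ℕ}
    (P : Fin n → Σ u : V, Σ v : V, G.Walk u v) : Prop :=
  (∀ i, (P i).2.2.IsPath) ∧ ∀ x : V, ∃ i, x ∈ (P i).2.2.support

/-- A family of walks is a path partition: each walk is a path and every
vertex lies on exactly one of the walks. -/
def IsPathPartition (G : SimpleGraph V) {n : ℕ}
    (P : Fin n → Σ u : V, Σ v : V, G.Walk u v) : Prop :=
  (∀ i, (P i).2.2.IsPath) ∧ ∀ x : V, ∃! i, x ∈ (P i).2.2.support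

/-- π_c : the path cover number. -/
noncomputable def pathCoverNum (G : SimpleGraph V) : ℕ :=
  sInf {n | ∃ P : Fin n → Σ u : V, Σ v : V, G.Walk u v, IsPathCover G P}

/-- ρ_c : the induced path cover number. -/
noncomputable def inducedPathCoverNum (G : SimpleGraph V) : ℕ :=
  sInf {n | ∃ P : Fin n → Σ u : V, Σ v : V, G.Walk u v,
    IsPathCover G P ∧ ∀ i, IsInducedWalk G (P i).2.2}

/-- ip_c : the isometric path cover number. -/
noncomputable def isometricPathCoverNum (G : SimpleGraph V) : ℕ :=
  sInf {n | ∃ P : Fin n → Σ u : V, Σ v : V, G.Walk u v,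
    IsPathCover G P ∧ ∀ i, IsIsometricWalk G (P i).2.2}

/-- π_p : the path partition number. -/
noncomputable def pathPartitionNum (G : SimpleGraph V) : ℕ :=
  sInf {n | ∃ P : Fin n → Σ u : V, Σ v : V, G.Walk u v, IsPathPartition G P}

/-- ρ_p : the induced path partition number. -/
noncomputable def inducedPathPartitionNum (G : SimpleGraph V) : ℕ :=
  sInf {n | ∃ P : Fin n → Σ u : V, Σ v : V, G.Walk u v,
    IsPathPartition G P ∧ ∀ i, IsInducedWalk G (P i).2.2}

/-- ip_p : the isometric path partition number. -/
noncomputable def isometricPathPartitionNum (G : SimpleGraph V) : ℕ :=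
  sInf {n | ∃ P : Fin n → Σ u : V, Σ v : V, G.Walk u v,
    IsPathPartition G P ∧ ∀ i, IsIsometricWalk G (P i).2.2}


lemma merge_paths {V : Type*} (G : SimpleGraph V) {m : ℕ}
    (P : Fin (m+1) → Σ u : V, Σ v : V, G.Walk u v)
    (hpath : ∀ i, (P i).2.2.IsPath)
    (huniq : ∀ x : V, ∃! i, x ∈ (P i).2.2.support)
    {i j : Fin (m+1)} (hij : i ≠ j)
    (hadj : G.Adj (P i).1 (P j).1) :
    ∃ Q : Fin m → Σ u : V, Σ v : V, G.Walk u v,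
      (∀ k, (Q k).2.2.IsPath) ∧ ∀ x : V, ∃! k, x ∈ (Q k).2.2.support := by
  have hdisj : ∀ x, ∀ a b : Fin (m+1), x ∈ (P a).2.2.support → x ∈ (P b).2.2.support → a = b := by
    intro x a b ha hb
    obtain ⟨c, _, hc⟩ := huniq x
    rw [hc a ha, hc b hb]
  set merged : G.Walk (P i).2.1 (P j).2.1 :=
    (P i).2.2.reverse.append (Walk.cons hadj (P j).2.2) with hm
  have hmsupp : ∀ x, x ∈ merged.support ↔ x ∈ (P i).2.2.support ∨ x ∈ (P j).2.2.support := by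
    intro x
    rw [hm, Walk.mem_support_append_iff, Walk.support_reverse, List.mem_reverse,
      Walk.support_cons, List.mem_cons]
    constructor
    · rintro (h | h | h)
      · exact Or.inl h
      · exact Or.inl (h ▸ (P i).2.2.start_mem_support)
      · exact Or.inr h
    · rintro (h | h)
      · exact Or.inl h
      · exact Or.inr (Or.inr h)
  have hmpath : merged.IsPath := by
    rw [Walk.isPath_def, hm, Walk.support_append, List.nodup_append]
    refine ⟨?_, ?_, ?_⟩
    · rw [Walk.support_reverse]; exact List.nodup_reverse.2 ((hpath i).support_nodup)
    · rw [Walk.support_cons, List.tail_cons]; exact (hpath j).support_nodup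
    · intro x hx y hx' hxy
      rw [Walk.support_reverse, List.mem_reverse] at hx
      rw [Walk.support_cons, List.tail_cons] at hx'
      rw [← hxy] at hx'
      exact hij (hdisj x i j hx hx')
  refine ⟨fun k => if h : j.succAbove k = i then ⟨_, _, merged⟩ else P (j.succAbove k), ?_, ?_⟩
  · intro k
    by_cases h : j.succAbove k = i
    · beta_reduce; rw [dif_pos h]; exact hmpath
    · beta_reduce; rw [dif_neg h]; exact hpath _
  · intro x
    obtain ⟨c, hc, hcu⟩ := huniq x
    by_cases hcj : c = j ∨ c = i
    · -- x is on the merged path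
      obtain ⟨k, hk⟩ := Fin.exists_succAbove_eq hij
      refine ⟨k, ?_, ?_⟩
      · show x ∈ (dite _ _ _ : Σ u : V, Σ v : V, G.Walk u v).2.2.support
        rw [dif_pos hk]
        rcases hcj with rfl | rfl
        · exact (hmsupp x).2 (Or.inr hc)
        · exact (hmsupp x).2 (Or.inl hc)
      · intro k' hk'
        by_cases h' : j.succAbove k' = i
        · exact Fin.succAbove_right_injective (h'.trans hk.symm)
        · exfalso
          beta_reduce at hk'; rw [dif_neg h'] at hk'
          have := hcu _ hk'
          rcases hcj with rfl | rfl
          · exact Fin.succAbove_ne c k' this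
          · exact h' this
    · push_neg at hcj
      obtain ⟨k, hk⟩ := Fin.exists_succAbove_eq hcj.1
      refine ⟨k, ?_, ?_⟩
      · show x ∈ (dite _ _ _ : Σ u : V, Σ v : V, G.Walk u v).2.2.support
        rw [dif_neg (hk.symm ▸ hcj.2 : j.succAbove k ≠ i), hk]
        exact hc
      · intro k' hk'
        by_cases h' : j.succAbove k' = i
        · exfalso
          beta_reduce at hk'; rw [dif_pos h'] at hk'
          rcases (hmsupp x).1 hk' with h | h
          · exact hcj.2 (hcu i h).symm
          · exact hcj.1 (hcu j h).symm
        · beta_reduce at hk'; rw [dif_neg h'] at hk'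
          exact Fin.succAbove_right_injective ((hcu _ hk').trans hk.symm)

theorem stmt_4 {V : Type*} [Fintype V] (G : SimpleGraph V) {n : ℕ}
    (P : Fin n → Σ u : V, Σ v : V, G.Walk u v) (hP : IsPathPartition G P)
    (hmin : ∀ (m : ℕ) (Q : Fin m → Σ u : V, Σ v : V, G.Walk u v),
      IsPathPartition G Q → n ≤ m) :
    ∃ S : Set V, (∀ a ∈ S, ∀ b ∈ S, ¬ G.Adj a b) ∧
      ∀ i, ∃! x, x ∈ S ∧ x ∈ (P i).2.2.support := by
  obtain ⟨hpath, huniq⟩ := hP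
  refine ⟨Set.range (fun i => (P i).1), ?_, ?_⟩
  · rintro a ⟨i, rfl⟩ b ⟨j, rfl⟩ hadj
    have hij : i ≠ j := by
      rintro rfl; exact G.ne_of_adj hadj rfl
    obtain ⟨m, rfl⟩ : ∃ m, n = m + 1 := ⟨n - 1, (Nat.succ_pred_eq_of_pos (Nat.pos_of_ne_zero
      (by rintro rfl; exact i.elim0))).symm⟩
    obtain ⟨Q, hQ1, hQ2⟩ := merge_paths G P hpath huniq hij hadj
    exact absurd (hmin m Q ⟨hQ1, hQ2⟩) (by omega)
  · intro i
    refine ⟨(P i).1, ⟨⟨i, rfl⟩, (P i).2.2.start_mem_support⟩, ?_⟩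
    rintro y ⟨⟨k, rfl⟩, hy⟩
    obtain ⟨c, _, hcu⟩ := huniq (P k).1
    have hk : k = i := (hcu k (P k).2.2.start_mem_support).trans (hcu i hy).symm
    subst hk
    rfl
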